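/- The simplification rules on deducibility constraint systems are strongly terminating: there is no infinite sequence of simplification steps C ⇝_σ1 C1 ⇝_σ2 C2 ⇝ ... . -/

import Mathlib

open scoped Classical

/-- Terms built from names, variables, pairing, symmetric/asymmetric encryption,
signatures and private keys. -/
inductive Tm where
  | var : ℕ → Tm
  | name : ℕ → Tm
  | pair : Tm → Tm → Tm
  | enc : Tm → Tm → Tm
  | enca : Tm → Tm → Tm
  | sign : Tm → Tm → Tm
  | priv : Tm → Tm
deriving DecidableEq

namespace Tm

/-- The variables of a term. -/
def vars : Tm → Finset ℕ
  | var x => {x}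
  | name _ => ∅
  | pair s t => s.vars ∪ t.vars
  | enc s t => s.vars ∪ t.vars
  | enca s t => s.vars ∪ t.vars
  | sign s t => s.vars ∪ t.vars
  | priv t => t.vars

/-- The subterms of a term. -/
def subterms : Tm → Finset Tm
  | var x => {var x}
  | name a => {name a}
  | pair s t => insert (pair s t) (s.subterms ∪ t.subterms)
  | enc s t => insert (enc s t) (s.subterms ∪ t.subterms)
  | enca s t => insert (enca s t) (s.subterms ∪ t.subterms)
  | sign s t => insert (sign s t) (s.subterms ∪ t.subterms)
  | priv t => insert (priv t) t.subterms

/-- A term is a variable. -/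
def IsVar : Tm → Prop
  | var _ => True
  | _ => False

end Tm

/-- The Dolev-Yao deduction relation `T ⊢ u`. -/
inductive Deduce : Finset Tm → Tm → Prop where
  | ax {T u} : u ∈ T → Deduce T u
  | pairI {T x y} : Deduce T x → Deduce T y → Deduce T (Tm.pair x y)
  | encI {T x y} : Deduce T x → Deduce T y → Deduce T (Tm.enc x y)
  | encaI {T x y} : Deduce T x → Deduce T y → Deduce T (Tm.enca x y)
  | signI {T x y} : Deduce T x → Deduce T y → Deduce T (Tm.sign x y)
  | encE {T x y} : Deduce T (Tm.enc x y) → Deduce T y → Deduce T x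
  | encaE {T x y} : Deduce T (Tm.enca x y) → Deduce T (Tm.priv y) → Deduce T x
  | fstE {T x y} : Deduce T (Tm.pair x y) → Deduce T x
  | sndE {T x y} : Deduce T (Tm.pair x y) → Deduce T y

/-- Substitutions. -/
def Subst := ℕ → Tm

/-- Applying a substitution to a term. -/
def Tm.subst (σ : Subst) : Tm → Tm
  | .var x => σ x
  | .name a => .name a
  | .pair s t => .pair (s.subst σ) (t.subst σ)
  | .enc s t => .enc (s.subst σ) (t.subst σ)
  | .enca s t => .enca (s.subst σ) (t.subst σ)
  | .sign s t => .sign (s.subst σ) (t.subst σ)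
  | .priv t => .priv (t.subst σ)

/-- The identity substitution. -/
def idSubst : Subst := Tm.var

/-- Composition of substitutions: `σ.comp τ` applies `σ` first, then `τ`. -/
def Subst.comp (σ τ : Subst) : Subst := fun x => (σ x).subst τ

/-- The variables of a finite set of terms. -/
def setVars (T : Finset Tm) : Finset ℕ := T.sup Tm.vars

/-- The subterms of a finite set of terms. -/
def stSet (T : Finset Tm) : Finset Tm := T.sup Tm.subterms

/-- A deducibility constraint `T ⊩ u`: a (nonempty) finite set of terms and a term. -/
abbrev Cst := Finset Tm × Tm

/-- Applying a substitution to a constraint. -/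
def conSubst (σ : Subst) (c : Cst) : Cst := (c.1.image (Tm.subst σ), c.2.subst σ)

/-- Applying a substitution to a constraint system. -/
def csSubst (σ : Subst) (S : Finset Cst) : Finset Cst := S.image (conSubst σ)

/-- The variables of a constraint system. -/
def sysVars (C : Finset Cst) : Finset ℕ := C.sup (fun c => setVars c.1 ∪ c.2.vars)

/-- The set `{x | (T' ⊩ x) ∈ S, T' ⊊ T}` of variables (as terms) occurring as
right-hand sides of constraints of `S` whose left-hand side is strictly contained in `T`. -/
noncomputable def extraVars (S : Finset Cst) (T : Finset Tm) : Finset Tm :=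
  (S.filter (fun c => c.1 ⊂ T ∧ c.2.IsVar)).image Prod.snd

/-- `C` is a deducibility constraint system: left-hand sides are nonempty,
totally ordered by inclusion, and every variable of a left-hand side `T` occurs in
the right-hand side of a constraint whose left-hand side is minimal among those whose
right-hand side contains the variable, and strictly included in `T`. -/
def IsCS (C : Finset Cst) : Prop :=
  (∀ c ∈ C, c.1.Nonempty) ∧
  (∀ c ∈ C, ∀ c' ∈ C, c.1 ⊆ c'.1 ∨ c'.1 ⊆ c.1) ∧
  (∀ c ∈ C, ∀ x ∈ setVars c.1,
    ∃ c' ∈ C, x ∈ c'.2.vars ∧ c'.1 ⊂ c.1 ∧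
      ∀ c'' ∈ C, x ∈ c''.2.vars → c'.1 ⊆ c''.1)

/-- A solution of a constraint system: a ground substitution whose domain is `V(C)`
such that `Tθ ⊢ uθ` for every constraint `(T ⊩ u) ∈ C`. -/
def IsSolution (θ : Subst) (C : Finset Cst) : Prop :=
  (∀ x ∈ sysVars C, (θ x).vars = ∅) ∧
  (∀ x, x ∉ sysVars C → θ x = Tm.var x) ∧
  (∀ c ∈ C, Deduce (c.1.image (Tm.subst θ)) (c.2.subst θ))

/-- A (non-`⊥`) constraint system is solved if all right-hand sides are variables. -/
def Solved (C : Finset Cst) : Prop := ∀ c ∈ C, c.2.IsVar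

/-- `σ` is a most general unifier of `t` and `u`. -/
def IsMGU (σ : Subst) (t u : Tm) : Prop :=
  t.subst σ = u.subst σ ∧
  (∀ x, x ∉ t.vars ∪ u.vars → σ x = Tm.var x) ∧
  (∀ x, (σ x).vars ⊆ t.vars ∪ u.vars) ∧
  (∀ δ : Subst, t.subst δ = u.subst δ → ∃ ρ : Subst, ∀ x, δ x = (σ x).subst ρ)

/-- The binary constructors `pair`, `enc`, `enca`, `sign`. -/
inductive BinOp where
  | pair | enc | enca | sign

def BinOp.app : BinOp → Tm → Tm → Tm
  | .pair => Tm.pair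
  | .enc => Tm.enc
  | .enca => Tm.enca
  | .sign => Tm.sign

/-- One step of simplification `C ⇝_σ C'` (result `none` represents `⊥`),
given by the rules R1, R2, R3, R3', R4, Rf. -/
inductive Step : Finset Cst → Subst → Option (Finset Cst) → Prop where
  | r1 {S : Finset Cst} {T : Finset Tm} {u : Tm} :
      (T, u) ∈ S →
      Deduce (T ∪ extraVars (S.erase (T, u)) T) u →
      Step S idSubst (some (S.erase (T, u)))
  | r2 {S : Finset Cst} {T : Finset Tm} {u t : Tm} {σ : Subst} :
      (T, u) ∈ S → t ∈ stSet T → ¬ t.IsVar → ¬ u.IsVar → t ≠ u →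
      IsMGU σ t u →
      Step S σ (some (csSubst σ S))
  | r3 {S : Finset Cst} {T : Finset Tm} {u t₁ t₂ : Tm} {σ : Subst} :
      (T, u) ∈ S → t₁ ∈ stSet T → t₂ ∈ stSet T → ¬ t₁.IsVar → ¬ t₂.IsVar →
      t₁ ≠ t₂ → IsMGU σ t₁ t₂ →
      Step S σ (some (csSubst σ S))
  | r3' {S : Finset Cst} {T : Finset Tm} {u t₁ t₂ t₃ : Tm} {σ : Subst} :
      (T, u) ∈ S → Tm.enca t₁ t₂ ∈ stSet T → Tm.priv t₃ ∈ stSet T →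
      t₂ ≠ t₃ → (t₂.IsVar ∨ t₃.IsVar) → IsMGU σ t₂ t₃ →
      Step S σ (some (csSubst σ S))
  | r4 {S : Finset Cst} {T : Finset Tm} {u : Tm} :
      (T, u) ∈ S → setVars T ∪ u.vars = ∅ → ¬ Deduce T u →
      Step S idSubst none
  | rf {S : Finset Cst} {T : Finset Tm} {u v : Tm} (b : BinOp) :
      (T, b.app u v) ∈ S →
      Step S idSubst (some (insert (T, u) (insert (T, v) (S.erase (T, b.app u v)))))

/-- Sequences of simplification steps `C ⇝*_σ C'`, composing the substitutions. -/
inductive Steps : Finset Cst → Subst → Option (Finset Cst) → Prop where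
  | refl (S) : Steps S idSubst (some S)
  | tail {S : Finset Cst} {σ : Subst} {S' : Finset Cst} {τ : Subst} {R} :
      Steps S σ (some S') → Step S' τ R → Steps S (σ.comp τ) R

/-- A security property, identified with its set of solutions (ground substitutions
making it true); `θ` solves `φσ` iff `σθ` solves `φ`. -/
def SecProp := Subst → Prop

/-- The instance `φσ` of a security property `φ` by a substitution `σ`. -/
def SecProp.subst (φ : SecProp) (σ : Subst) : SecProp := fun θ => φ (σ.comp θ)

/-- `θ` is an attack for `φ` and `C` if it is a solution of both. -/
def IsAttack (θ : Subst) (C : Finset Cst) (φ : SecProp) : Prop :=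
  IsSolution θ C ∧ φ θ

/-- One memorizing simplification step: `C;D ⇒_σ (C' \ D); (D ∪ (C \ C'))`. -/
inductive MStep : Finset Cst × Finset Cst → Subst → Finset Cst × Finset Cst → Prop where
  | mk {C D C' : Finset Cst} {σ : Subst} :
      Step C σ (some C') → MStep (C, D) σ (C' \ D, D ∪ (C \ C'))

/-- Sequences of memorizing simplification steps, composing the substitutions. -/
inductive MSteps : Finset Cst × Finset Cst → Subst → Finset Cst × Finset Cst → Prop where
  | refl (P) : MSteps P idSubst P
  | tail {P : Finset Cst × Finset Cst} {σ : Subst} {Q : Finset Cst × Finset Cst}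
      {τ : Subst} {R : Finset Cst × Finset Cst} :
      MSteps P σ Q → MStep Q τ R → MSteps P (σ.comp τ) R
-- auxiliary development, part 1
namespace Aux

@[simp] lemma subst_var (σ : Subst) (x : ℕ) : (Tm.var x).subst σ = σ x := rfl
@[simp] lemma subst_name (σ : Subst) (a : ℕ) : (Tm.name a).subst σ = Tm.name a := rfl
@[simp] lemma subst_pair (σ : Subst) (s t : Tm) : (Tm.pair s t).subst σ = Tm.pair (s.subst σ) (t.subst σ) := rfl
@[simp] lemma subst_enc (σ : Subst) (s t : Tm) : (Tm.enc s t).subst σ = Tm.enc (s.subst σ) (t.subst σ) := rfl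
@[simp] lemma subst_enca (σ : Subst) (s t : Tm) : (Tm.enca s t).subst σ = Tm.enca (s.subst σ) (t.subst σ) := rfl
@[simp] lemma subst_sign (σ : Subst) (s t : Tm) : (Tm.sign s t).subst σ = Tm.sign (s.subst σ) (t.subst σ) := rfl
@[simp] lemma subst_priv (σ : Subst) (t : Tm) : (Tm.priv t).subst σ = Tm.priv (t.subst σ) := rfl

@[simp] lemma vars_var (x : ℕ) : (Tm.var x).vars = {x} := rfl
@[simp] lemma vars_name (a : ℕ) : (Tm.name a).vars = ∅ := rfl
@[simp] lemma vars_pair (s t : Tm) : (Tm.pair s t).vars = s.vars ∪ t.vars := rfl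
@[simp] lemma vars_enc (s t : Tm) : (Tm.enc s t).vars = s.vars ∪ t.vars := rfl
@[simp] lemma vars_enca (s t : Tm) : (Tm.enca s t).vars = s.vars ∪ t.vars := rfl
@[simp] lemma vars_sign (s t : Tm) : (Tm.sign s t).vars = s.vars ∪ t.vars := rfl
@[simp] lemma vars_priv (t : Tm) : (Tm.priv t).vars = t.vars := rfl

/-- term size -/
def tsize : Tm → ℕ
  | .var _ => 1
  | .name _ => 1
  | .pair s t => tsize s + tsize t + 1
  | .enc s t => tsize s + tsize t + 1
  | .enca s t => tsize s + tsize t + 1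
  | .sign s t => tsize s + tsize t + 1
  | .priv t => tsize t + 1

lemma tsize_pos (t : Tm) : 0 < tsize t := by
  cases t <;> simp [tsize]

lemma mem_vars_subst {σ : Subst} {t : Tm} {y : ℕ} :
    y ∈ (t.subst σ).vars ↔ ∃ x ∈ t.vars, y ∈ (σ x).vars := by
  induction t with
  | var x => simp
  | name a => simp
  | pair s t ihs iht => simp [ihs, iht]; aesop
  | enc s t ihs iht => simp [ihs, iht]; aesop
  | enca s t ihs iht => simp [ihs, iht]; aesop
  | sign s t ihs iht => simp [ihs, iht]; aesop
  | priv t iht => simp [iht]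

lemma subst_subst (t : Tm) (a b : Subst) :
    (t.subst a).subst b = t.subst (a.comp b) := by
  induction t <;> simp [Subst.comp, *]

lemma ground_subst {t : Tm} (h : t.vars = ∅) (δ : Subst) : t.subst δ = t := by
  induction t with
  | var x => simp at h
  | name a => simp
  | pair s t ihs iht =>
      simp [Finset.union_eq_empty] at h; simp [ihs h.1, iht h.2]
  | enc s t ihs iht =>
      simp [Finset.union_eq_empty] at h; simp [ihs h.1, iht h.2]
  | enca s t ihs iht =>
      simp [Finset.union_eq_empty] at h; simp [ihs h.1, iht h.2]
  | sign s t ihs iht =>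
      simp [Finset.union_eq_empty] at h; simp [ihs h.1, iht h.2]
  | priv t iht =>
      simp at h; simp [iht h]

lemma tsize_subst_le {σ : Subst} {t : Tm} {x : ℕ} (h : x ∈ t.vars) :
    tsize (σ x) ≤ tsize (t.subst σ) := by
  induction t with
  | var y => simp at h; subst h; simp
  | name a => simp at h
  | pair s t ihs iht =>
      simp at h
      rcases h with h | h
      · exact le_trans (ihs h) (by simp [tsize]; omega)
      · exact le_trans (iht h) (by simp [tsize]; omega)
  | enc s t ihs iht =>
      simp at h
      rcases h with h | h
      · exact le_trans (ihs h) (by simp [tsize]; omega)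
      · exact le_trans (iht h) (by simp [tsize]; omega)
  | enca s t ihs iht =>
      simp at h
      rcases h with h | h
      · exact le_trans (ihs h) (by simp [tsize]; omega)
      · exact le_trans (iht h) (by simp [tsize]; omega)
  | sign s t ihs iht =>
      simp at h
      rcases h with h | h
      · exact le_trans (ihs h) (by simp [tsize]; omega)
      · exact le_trans (iht h) (by simp [tsize]; omega)
  | priv t iht =>
      simp at h
      exact le_trans (iht h) (by simp [tsize])

lemma tsize_subst_lt {σ : Subst} {t : Tm} {x : ℕ} (h : x ∈ t.vars) (hnv : ¬ t.IsVar) :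
    tsize (σ x) < tsize (t.subst σ) := by
  cases t with
  | var y => simp [Tm.IsVar] at hnv
  | name a => simp at h
  | pair s t =>
      simp at h
      rcases h with h | h
      · exact lt_of_le_of_lt (tsize_subst_le h) (by simp [tsize])
      · exact lt_of_le_of_lt (tsize_subst_le h) (by simp [tsize])
  | enc s t =>
      simp at h
      rcases h with h | h
      · exact lt_of_le_of_lt (tsize_subst_le h) (by simp [tsize])
      · exact lt_of_le_of_lt (tsize_subst_le h) (by simp [tsize])
  | enca s t =>
      simp at h
      rcases h with h | h
      · exact lt_of_le_of_lt (tsize_subst_le h) (by simp [tsize])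
      · exact lt_of_le_of_lt (tsize_subst_le h) (by simp [tsize])
  | sign s t =>
      simp at h
      rcases h with h | h
      · exact lt_of_le_of_lt (tsize_subst_le h) (by simp [tsize])
      · exact lt_of_le_of_lt (tsize_subst_le h) (by simp [tsize])
  | priv t =>
      simp at h
      exact lt_of_le_of_lt (tsize_subst_le h) (by simp [tsize])

lemma subst_eq_var {σ : Subst} {t : Tm} {y : ℕ} (h : t.subst σ = Tm.var y) :
    ∃ w, t = Tm.var w ∧ σ w = Tm.var y := by
  cases t <;> simp_all

end Aux
namespace Aux

/-- Disagreement pair for two non-unifiable-as-equal terms. -/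
def Dis (t u : Tm) : Prop :=
  ∃ x s, x ∈ t.vars ∪ u.vars ∧ s ≠ Tm.var x ∧ x ∉ s.vars ∧
    s.vars ⊆ t.vars ∪ u.vars ∧
    ∀ δ' : Subst, t.subst δ' = u.subst δ' → δ' x = s.subst δ'

lemma var_notin {x : ℕ} {u : Tm} (hne : u ≠ Tm.var x) {δ : Subst}
    (hδ : δ x = u.subst δ) : x ∉ u.vars := by
  intro hx
  by_cases hv : u.IsVar
  · cases u <;> simp [Tm.IsVar] at hv hx
    exact hne (by simp [hx])
  · have h := tsize_subst_lt (σ := δ) hx hv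
    rw [← hδ] at h
    exact lt_irrefl _ h

lemma dis_var_left {x : ℕ} {u : Tm} (hne : Tm.var x ≠ u) {δ : Subst}
    (hδ : (Tm.var x).subst δ = u.subst δ) : Dis (Tm.var x) u := by
  refine ⟨x, u, by simp, fun h => hne h.symm, ?_, by simp, ?_⟩
  · exact var_notin (fun h => hne h.symm) (by simpa using hδ)
  · intro δ' h; simpa using h

lemma dis_symm {t u : Tm} (h : Dis t u) : Dis u t := by
  obtain ⟨x, s, h1, h2, h3, h4, h5⟩ := h
  exact ⟨x, s, by rw [Finset.union_comm]; exact h1, h2, h3,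
    by rw [Finset.union_comm]; exact h4, fun δ' hδ' => h5 δ' hδ'.symm⟩

lemma dis_mono {a c t u : Tm} (h : Dis a c)
    (hsub : a.vars ∪ c.vars ⊆ t.vars ∪ u.vars)
    (hinj : ∀ δ' : Subst, t.subst δ' = u.subst δ' → a.subst δ' = c.subst δ') :
    Dis t u := by
  obtain ⟨x, s, h1, h2, h3, h4, h5⟩ := h
  exact ⟨x, s, hsub h1, h2, h3, h4.trans hsub, fun δ' hδ' => h5 δ' (hinj δ' hδ')⟩

lemma disagree : ∀ t u : Tm, t ≠ u → ∀ δ : Subst, t.subst δ = u.subst δ → Dis t u := by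
  intro t
  induction t with
  | var x =>
      intro u hne δ hδ
      exact dis_var_left hne hδ
  | name a =>
      intro u hne δ hδ
      cases u with
      | var y => exact dis_symm (dis_var_left (Ne.symm hne) hδ.symm)
      | name b => exact absurd (by simpa using hδ) (by simpa using hne)
      | pair c d => simp at hδ
      | enc c d => simp at hδ
      | enca c d => simp at hδ
      | sign c d => simp at hδ
      | priv c => simp at hδ
  | pair s t ihs iht =>
      intro u hne δ hδ
      cases u with
      | var y => exact dis_symm (dis_var_left (Ne.symm hne) hδ.symm)
      | pair c d =>
          simp only [subst_pair, Tm.pair.injEq] at hδ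
          by_cases hsc : s = c
          · subst hsc
            have htd : t ≠ d := by rintro rfl; exact hne rfl
            refine dis_mono (iht d htd δ hδ.2) (by intro z; simp; tauto) ?_
            intro δ' h; simp only [subst_pair, Tm.pair.injEq] at h; exact h.2
          · refine dis_mono (ihs c hsc δ hδ.1) (by intro z; simp; tauto) ?_
            intro δ' h; simp only [subst_pair, Tm.pair.injEq] at h; exact h.1
      | name b => simp at hδ
      | enc c d => simp at hδ
      | enca c d => simp at hδ
      | sign c d => simp at hδ
      | priv c => simp at hδ
  | enc s t ihs iht =>
      intro u hne δ hδ
      cases u with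
      | var y => exact dis_symm (dis_var_left (Ne.symm hne) hδ.symm)
      | enc c d =>
          simp only [subst_enc, Tm.enc.injEq] at hδ
          by_cases hsc : s = c
          · subst hsc
            have htd : t ≠ d := by rintro rfl; exact hne rfl
            refine dis_mono (iht d htd δ hδ.2) (by intro z; simp; tauto) ?_
            intro δ' h; simp only [subst_enc, Tm.enc.injEq] at h; exact h.2
          · refine dis_mono (ihs c hsc δ hδ.1) (by intro z; simp; tauto) ?_
            intro δ' h; simp only [subst_enc, Tm.enc.injEq] at h; exact h.1
      | name b => simp at hδ
      | pair c d => simp at hδ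
      | enca c d => simp at hδ
      | sign c d => simp at hδ
      | priv c => simp at hδ
  | enca s t ihs iht =>
      intro u hne δ hδ
      cases u with
      | var y => exact dis_symm (dis_var_left (Ne.symm hne) hδ.symm)
      | enca c d =>
          simp only [subst_enca, Tm.enca.injEq] at hδ
          by_cases hsc : s = c
          · subst hsc
            have htd : t ≠ d := by rintro rfl; exact hne rfl
            refine dis_mono (iht d htd δ hδ.2) (by intro z; simp; tauto) ?_
            intro δ' h; simp only [subst_enca, Tm.enca.injEq] at h; exact h.2
          · refine dis_mono (ihs c hsc δ hδ.1) (by intro z; simp; tauto) ?_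
            intro δ' h; simp only [subst_enca, Tm.enca.injEq] at h; exact h.1
      | name b => simp at hδ
      | pair c d => simp at hδ
      | enc c d => simp at hδ
      | sign c d => simp at hδ
      | priv c => simp at hδ
  | sign s t ihs iht =>
      intro u hne δ hδ
      cases u with
      | var y => exact dis_symm (dis_var_left (Ne.symm hne) hδ.symm)
      | sign c d =>
          simp only [subst_sign, Tm.sign.injEq] at hδ
          by_cases hsc : s = c
          · subst hsc
            have htd : t ≠ d := by rintro rfl; exact hne rfl
            refine dis_mono (iht d htd δ hδ.2) (by intro z; simp; tauto) ?_
            intro δ' h; simp only [subst_sign, Tm.sign.injEq] at h; exact h.2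
          · refine dis_mono (ihs c hsc δ hδ.1) (by intro z; simp; tauto) ?_
            intro δ' h; simp only [subst_sign, Tm.sign.injEq] at h; exact h.1
      | name b => simp at hδ
      | pair c d => simp at hδ
      | enc c d => simp at hδ
      | enca c d => simp at hδ
      | priv c => simp at hδ
  | priv t iht =>
      intro u hne δ hδ
      cases u with
      | var y => exact dis_symm (dis_var_left (Ne.symm hne) hδ.symm)
      | priv c =>
          simp only [subst_priv, Tm.priv.injEq] at hδ
          have htc : t ≠ c := by rintro rfl; exact hne rfl
          refine dis_mono (iht c htc δ hδ) (by intro z; simp) ?_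
          intro δ' h; simpa using h
      | name b => simp at hδ
      | pair c d => simp at hδ
      | enc c d => simp at hδ
      | enca c d => simp at hδ
      | sign c d => simp at hδ
end Aux
namespace Aux

lemma exists_nice_mgu : ∀ n : ℕ, ∀ t u : Tm, (t.vars ∪ u.vars).card ≤ n → t ≠ u →
    (∃ δ : Subst, t.subst δ = u.subst δ) →
    ∃ (σ₀ : Subst) (D : Finset ℕ), D.Nonempty ∧ D ⊆ t.vars ∪ u.vars ∧
      t.subst σ₀ = u.subst σ₀ ∧
      (∀ z, z ∉ D → σ₀ z = Tm.var z) ∧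
      (∀ z ∈ D, (σ₀ z).vars ⊆ (t.vars ∪ u.vars) \ D) ∧
      (∀ δ : Subst, t.subst δ = u.subst δ → ∃ ρ : Subst, ∀ z, δ z = (σ₀ z).subst ρ) := by
  intro n
  induction n with
  | zero =>
      intro t u hcard hne ⟨δ, hδ⟩
      exfalso
      have hV : t.vars ∪ u.vars = ∅ := Finset.card_eq_zero.1 (Nat.le_zero.1 hcard)
      rw [Finset.union_eq_empty] at hV
      rw [ground_subst hV.1, ground_subst hV.2] at hδ
      exact hne hδ
  | succ n ih =>
      intro t u hcard hne ⟨δ, hδ⟩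
      obtain ⟨x, s, hxV, hsnv, hxs, hsV, hkey⟩ := disagree t u hne δ hδ
      set τ : Subst := fun z => if z = x then s else Tm.var z with hτ
      have hτx : τ x = s := by simp [hτ]
      have hτne : ∀ z, z ≠ x → τ z = Tm.var z := by intro z hz; simp [hτ, hz]
      -- any unifier absorbs τ
      have habs : ∀ δ' : Subst, t.subst δ' = u.subst δ' → Subst.comp τ δ' = δ' := by
        intro δ' hδ'
        funext z
        by_cases hz : z = x
        · subst hz
          show (τ z).subst δ' = δ' z
          rw [hτx, ← hkey δ' hδ']
        · show (τ z).subst δ' = δ' z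
          rw [hτne z hz]; rfl
      have habs' : ∀ (w : Tm) (δ' : Subst), t.subst δ' = u.subst δ' →
          (w.subst τ).subst δ' = w.subst δ' := by
        intro w δ' hδ'
        rw [subst_subst, habs δ' hδ']
      have hδ2 : (t.subst τ).subst δ = (u.subst τ).subst δ := by
        rw [habs' t δ hδ, habs' u δ hδ]; exact hδ
      -- variables of the τ-instances
      have hvarsub : (t.subst τ).vars ∪ (u.subst τ).vars ⊆ (t.vars ∪ u.vars) \ {x} := by
        intro z hz
        have : ∃ w ∈ t.vars ∪ u.vars, z ∈ (τ w).vars := by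
          rcases Finset.mem_union.1 hz with h | h
          · obtain ⟨w, hw, hzw⟩ := mem_vars_subst.1 h
            exact ⟨w, Finset.mem_union_left _ hw, hzw⟩
          · obtain ⟨w, hw, hzw⟩ := mem_vars_subst.1 h
            exact ⟨w, Finset.mem_union_right _ hw, hzw⟩
        obtain ⟨w, hwV, hzw⟩ := this
        by_cases hwx : w = x
        · subst hwx
          rw [hτx] at hzw
          exact Finset.mem_sdiff.2 ⟨hsV hzw, by simp; rintro rfl; exact hxs hzw⟩
        · rw [hτne w hwx] at hzw
          simp at hzw
          subst hzw
          exact Finset.mem_sdiff.2 ⟨hwV, by simpa using hwx⟩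
      by_cases heq : t.subst τ = u.subst τ
      · refine ⟨τ, {x}, Finset.singleton_nonempty x, by simpa using hxV, heq, ?_, ?_, ?_⟩
        · intro z hz; exact hτne z (by simpa using hz)
        · intro z hz
          simp only [Finset.mem_singleton] at hz
          subst hz
          rw [hτx]
          intro w hw
          exact Finset.mem_sdiff.2 ⟨hsV hw, by simp; rintro rfl; exact hxs hw⟩
        · intro δ' hδ'
          exact ⟨δ', fun z => by rw [← congrFun (habs δ' hδ') z]; rfl⟩
      · -- recursive case
        have hxVcard : 0 < (t.vars ∪ u.vars).card := Finset.card_pos.2 ⟨x, hxV⟩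
        have hcard' : ((t.subst τ).vars ∪ (u.subst τ).vars).card ≤ n := by
          have h1 := Finset.card_le_card hvarsub
          have h2 : ((t.vars ∪ u.vars) \ {x}).card = (t.vars ∪ u.vars).card - 1 := by
            rw [Finset.card_sdiff_of_subset (by simpa using hxV)]; simp
          omega
        obtain ⟨σ₀', D', hD'ne, hD'sub, huni', hid', hvars'', hmgu'⟩ :=
          ih (t.subst τ) (u.subst τ) hcard' heq ⟨δ, hδ2⟩
        refine ⟨Subst.comp τ σ₀', insert x D', Finset.insert_nonempty _ _, ?_, ?_, ?_, ?_, ?_⟩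
        · intro z hz
          rcases Finset.mem_insert.1 hz with rfl | hz
          · exact hxV
          · exact Finset.mem_sdiff.1 (hvarsub (hD'sub hz)) |>.1
        · show (t.subst (Subst.comp τ σ₀')) = (u.subst (Subst.comp τ σ₀'))
          rw [← subst_subst, ← subst_subst, huni']
        · intro z hz
          simp only [Finset.mem_insert, not_or] at hz
          show (τ z).subst σ₀' = Tm.var z
          rw [hτne z hz.1]
          exact hid' z hz.2
        · -- vars of σ₀ z for z in D
          have hgen : ∀ y, y ∈ (t.vars ∪ u.vars) → y ≠ x →
              (σ₀' y).vars ⊆ (t.vars ∪ u.vars) \ insert x D' := by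
            intro y hyV hyx
            by_cases hyD' : y ∈ D'
            · intro w hw
              have := hvars'' y hyD' hw
              rw [Finset.mem_sdiff] at this
              have h3 := hvarsub this.1
              rw [Finset.mem_sdiff] at h3
              refine Finset.mem_sdiff.2 ⟨h3.1, ?_⟩
              simp only [Finset.mem_insert, not_or]
              exact ⟨by simpa using h3.2, this.2⟩
            · rw [hid' y hyD']
              intro w hw
              simp at hw
              subst hw
              exact Finset.mem_sdiff.2 ⟨hyV, by simp [hyx, hyD']⟩
          intro z hz w hw
          rcases Finset.mem_insert.1 hz with rfl | hzD'
          · show w ∈ _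
            have : w ∈ ((τ z).subst σ₀').vars := hw
            rw [hτx] at this
            obtain ⟨y, hys, hwy⟩ := mem_vars_subst.1 this
            exact hgen y (hsV hys) (fun h => hxs (h ▸ hys)) hwy
          · have hzx : z ≠ x := by
              intro h
              have := hD'sub hzD'
              rw [h] at this
              have := Finset.mem_sdiff.1 (hvarsub this)
              simp at this
            have : w ∈ ((τ z).subst σ₀').vars := hw
            rw [hτne z hzx] at this
            simp only [subst_var] at this
            have hzV : z ∈ t.vars ∪ u.vars := (Finset.mem_sdiff.1 (hvarsub (hD'sub hzD'))).1
            exact hgen z hzV hzx this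
        · intro δ' hδ'
          have hδ'2 : (t.subst τ).subst δ' = (u.subst τ).subst δ' := by
            rw [habs' t δ' hδ', habs' u δ' hδ']; exact hδ'
          obtain ⟨ρ, hρ⟩ := hmgu' δ' hδ'2
          refine ⟨ρ, fun z => ?_⟩
          have hcompeq : Subst.comp σ₀' ρ = δ' := by
            funext y
            show (σ₀' y).subst ρ = δ' y
            exact (hρ y).symm
          show δ' z = ((τ z).subst σ₀').subst ρ
          rw [subst_subst, hcompeq, ← congrFun (habs δ' hδ') z]
          rfl

end Aux
namespace Aux

lemma mgu_missing_var {σ : Subst} {t u : Tm} (h : IsMGU σ t u) (hne : t ≠ u) :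
    ∃ x ∈ t.vars ∪ u.vars, ∀ z, x ∉ (σ z).vars := by
  classical
  obtain ⟨huni, hid, hsub, hmgu⟩ := h
  set V := t.vars ∪ u.vars with hV
  obtain ⟨σ₀, D, hDne, hDV, huni₀, hid₀, hvars₀, hmgu₀⟩ :=
    exists_nice_mgu V.card t u le_rfl hne ⟨σ, huni⟩
  obtain ⟨ρ, hρ⟩ := hmgu σ₀ huni₀
  obtain ⟨ρ', hρ'⟩ := hmgu₀ σ huni
  -- on V \ D, σ maps variables to variables
  have hvarwit : ∀ y, y ∉ D → ∃ w, σ y = Tm.var w := by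
    intro y hyD
    have h2 : (σ y).subst ρ = Tm.var y := by rw [← hρ y, hid₀ y hyD]
    obtain ⟨w, hw, _⟩ := subst_eq_var h2
    exact ⟨w, hw⟩
  set wf : ℕ → ℕ := fun y => if h : ∃ w, σ y = Tm.var w then h.choose else 0 with hwfdef
  have hwf : ∀ y, y ∉ D → σ y = Tm.var (wf y) := by
    intro y hyD
    have hex := hvarwit y hyD
    simp only [hwfdef, dif_pos hex]
    exact hex.choose_spec
  set coverage := V.biUnion (fun z => (σ z).vars) with hcovdef
  have hcov_sub : coverage ⊆ (V \ D).image wf := by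
    intro w hw
    obtain ⟨z, hzV, hzw⟩ := Finset.mem_biUnion.1 hw
    by_cases hzD : z ∈ D
    · rw [hρ' z] at hzw
      obtain ⟨y, hy₀, hwy⟩ := mem_vars_subst.1 hzw
      have hy : y ∈ V \ D := hvars₀ z hzD hy₀
      have hyD : y ∉ D := (Finset.mem_sdiff.1 hy).2
      have hρ'y : ρ' y = σ y := by
        have := hρ' y
        rw [hid₀ y hyD] at this
        exact this.symm
      rw [hρ'y, hwf y hyD] at hwy
      simp at hwy
      subst hwy
      exact Finset.mem_image.2 ⟨y, hy, rfl⟩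
    · rw [hwf z hzD] at hzw
      simp at hzw
      subst hzw
      exact Finset.mem_image.2 ⟨z, Finset.mem_sdiff.2 ⟨hzV, hzD⟩, rfl⟩
  have hcovV : coverage ⊆ V := by
    intro w hw
    obtain ⟨z, hzV, hzw⟩ := Finset.mem_biUnion.1 hw
    exact hsub z hzw
  have hcard : coverage.card < V.card := by
    have h1 := Finset.card_le_card hcov_sub
    have h2 : ((V \ D).image wf).card ≤ (V \ D).card := Finset.card_image_le
    have h3 : (V \ D).card = V.card - D.card := Finset.card_sdiff_of_subset hDV
    have h4 : 0 < D.card := Finset.card_pos.2 hDne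
    have h5 : D.card ≤ V.card := Finset.card_le_card hDV
    omega
  have hss : coverage ⊂ V := hcovV.ssubset_of_ne (fun h => by rw [h] at hcard; omega)
  obtain ⟨x, hxV, hxcov⟩ := Finset.exists_of_ssubset hss
  refine ⟨x, hxV, fun z hz => ?_⟩
  by_cases hzV : z ∈ V
  · exact hxcov (Finset.mem_biUnion.2 ⟨z, hzV, hz⟩)
  · rw [hid z hzV] at hz
    simp at hz
    subst hz
    exact hzV hxV

end Aux
namespace Aux

lemma mem_setVars {x : ℕ} {T : Finset Tm} : x ∈ setVars T ↔ ∃ w ∈ T, x ∈ w.vars :=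
  Finset.mem_sup

lemma mem_sysVars {x : ℕ} {S : Finset Cst} :
    x ∈ sysVars S ↔ ∃ c ∈ S, x ∈ setVars c.1 ∪ c.2.vars :=
  Finset.mem_sup

lemma vars_subterm {s w : Tm} (h : s ∈ w.subterms) : s.vars ⊆ w.vars := by
  induction w with
  | var x => simp [Tm.subterms] at h; subst h; exact subset_rfl
  | name a => simp [Tm.subterms] at h; subst h; exact subset_rfl
  | pair a b iha ihb =>
      simp [Tm.subterms] at h
      rcases h with rfl | h | h
      · exact subset_rfl
      · exact (iha h).trans Finset.subset_union_left
      · exact (ihb h).trans Finset.subset_union_right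
  | enc a b iha ihb =>
      simp [Tm.subterms] at h
      rcases h with rfl | h | h
      · exact subset_rfl
      · exact (iha h).trans Finset.subset_union_left
      · exact (ihb h).trans Finset.subset_union_right
  | enca a b iha ihb =>
      simp [Tm.subterms] at h
      rcases h with rfl | h | h
      · exact subset_rfl
      · exact (iha h).trans Finset.subset_union_left
      · exact (ihb h).trans Finset.subset_union_right
  | sign a b iha ihb =>
      simp [Tm.subterms] at h
      rcases h with rfl | h | h
      · exact subset_rfl
      · exact (iha h).trans Finset.subset_union_left
      · exact (ihb h).trans Finset.subset_union_right
  | priv a iha =>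
      simp [Tm.subterms] at h
      rcases h with rfl | h
      · exact subset_rfl
      · exact iha h

lemma vars_stSet {s : Tm} {T : Finset Tm} (h : s ∈ stSet T) : s.vars ⊆ setVars T := by
  obtain ⟨w, hwT, hsw⟩ := Finset.mem_sup.1 h
  intro x hx
  exact mem_setVars.2 ⟨w, hwT, vars_subterm hsw hx⟩

lemma sysVars_csSubst_card_lt {σ : Subst} {a b : Tm} (hmgu : IsMGU σ a b) (hne : a ≠ b)
    {S : Finset Cst} (hVS : a.vars ∪ b.vars ⊆ sysVars S) :
    (sysVars (csSubst σ S)).card < (sysVars S).card := by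
  obtain ⟨x, hxV, hx⟩ := mgu_missing_var hmgu hne
  have hmem : ∀ y ∈ sysVars (csSubst σ S), ∃ z ∈ sysVars S, y ∈ (σ z).vars := by
    intro y hy
    obtain ⟨c', hc', hyc'⟩ := mem_sysVars.1 hy
    obtain ⟨c, hcS, rfl⟩ := Finset.mem_image.1 hc'
    rcases Finset.mem_union.1 hyc' with h | h
    · obtain ⟨w', hw', hyw'⟩ := mem_setVars.1 h
      obtain ⟨w, hw, rfl⟩ := Finset.mem_image.1 hw'
      obtain ⟨z, hzw, hyz⟩ := mem_vars_subst.1 hyw'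
      exact ⟨z, mem_sysVars.2 ⟨c, hcS, Finset.mem_union_left _ (mem_setVars.2 ⟨w, hw, hzw⟩)⟩, hyz⟩
    · obtain ⟨z, hzw, hyz⟩ := mem_vars_subst.1 h
      exact ⟨z, mem_sysVars.2 ⟨c, hcS, Finset.mem_union_right _ hzw⟩, hyz⟩
  have hsub' : sysVars (csSubst σ S) ⊆ sysVars S := by
    intro y hy
    obtain ⟨z, hzS, hyz⟩ := hmem y hy
    by_cases hzV : z ∈ a.vars ∪ b.vars
    · exact hVS (hmgu.2.2.1 z hyz)
    · rw [hmgu.2.1 z hzV] at hyz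
      simp at hyz
      subst hyz
      exact hzS
  have hxS : x ∈ sysVars S := hVS hxV
  have hxnot : x ∉ sysVars (csSubst σ S) := by
    intro hcon
    obtain ⟨z, _, hxz⟩ := hmem x hcon
    exact hx z hxz
  exact Finset.card_lt_card (hsub'.ssubset_of_ne (fun h => hxnot (h ▸ hxS)))

lemma sum_insert_le' (f : Cst → ℕ) (a : Cst) (s : Finset Cst) :
    ∑ x ∈ insert a s, f x ≤ f a + ∑ x ∈ s, f x := by
  by_cases h : a ∈ s
  · rw [Finset.insert_eq_self.2 h]; exact Nat.le_add_left _ _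
  · rw [Finset.sum_insert h]

lemma bapp_vars (b : BinOp) (u v : Tm) : (b.app u v).vars = u.vars ∪ v.vars := by
  cases b <;> rfl

lemma bapp_tsize (b : BinOp) (u v : Tm) : tsize (b.app u v) = tsize u + tsize v + 1 := by
  cases b <;> rfl

lemma step_decrease {S : Finset Cst} {σ : Subst} {S' : Finset Cst}
    (h : Step S σ (some S')) :
    (sysVars S').card < (sysVars S).card ∨
    ((sysVars S').card ≤ (sysVars S).card ∧
      (∑ c ∈ S', tsize c.2) < (∑ c ∈ S, tsize c.2)) := by
  cases h with
  | @r1 T u hmem _ =>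
      right
      constructor
      · apply Finset.card_le_card
        intro x hx
        obtain ⟨c, hc, hxc⟩ := mem_sysVars.1 hx
        exact mem_sysVars.2 ⟨c, Finset.mem_of_mem_erase hc, hxc⟩
      · have hsum := Finset.sum_erase_add S (fun c => tsize c.2) hmem
        have := tsize_pos u
        simp only at hsum
        omega
  | @r2 T u t _ hmem ht _ _ hne hmgu =>
      left
      apply sysVars_csSubst_card_lt hmgu hne
      intro z hz
      rcases Finset.mem_union.1 hz with h | h
      · exact mem_sysVars.2 ⟨(T, u), hmem, Finset.mem_union_left _ (vars_stSet ht h)⟩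
      · exact mem_sysVars.2 ⟨(T, u), hmem, Finset.mem_union_right _ h⟩
  | @r3 T u t₁ t₂ _ hmem ht1 ht2 _ _ hne hmgu =>
      left
      apply sysVars_csSubst_card_lt hmgu hne
      intro z hz
      rcases Finset.mem_union.1 hz with h | h
      · exact mem_sysVars.2 ⟨(T, u), hmem, Finset.mem_union_left _ (vars_stSet ht1 h)⟩
      · exact mem_sysVars.2 ⟨(T, u), hmem, Finset.mem_union_left _ (vars_stSet ht2 h)⟩
  | @r3' T u t₁ t₂ t₃ _ hmem henca hpriv hne _ hmgu =>
      left
      apply sysVars_csSubst_card_lt hmgu hne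
      intro z hz
      rcases Finset.mem_union.1 hz with h | h
      · refine mem_sysVars.2 ⟨(T, u), hmem, Finset.mem_union_left _ (vars_stSet henca ?_)⟩
        simp [h]
      · refine mem_sysVars.2 ⟨(T, u), hmem, Finset.mem_union_left _ (vars_stSet hpriv ?_)⟩
        simpa using h
  | @rf T u v b hmem =>
      right
      constructor
      · apply Finset.card_le_card
        intro x hx
        obtain ⟨c, hc, hxc⟩ := mem_sysVars.1 hx
        rcases Finset.mem_insert.1 hc with rfl | hc
        · refine mem_sysVars.2 ⟨(T, b.app u v), hmem, ?_⟩
          rcases Finset.mem_union.1 hxc with h | h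
          · exact Finset.mem_union_left _ h
          · exact Finset.mem_union_right _ (by rw [bapp_vars]; exact Finset.mem_union_left _ h)
        rcases Finset.mem_insert.1 hc with rfl | hc
        · refine mem_sysVars.2 ⟨(T, b.app u v), hmem, ?_⟩
          rcases Finset.mem_union.1 hxc with h | h
          · exact Finset.mem_union_left _ h
          · exact Finset.mem_union_right _ (by rw [bapp_vars]; exact Finset.mem_union_right _ h)
        · exact mem_sysVars.2 ⟨c, Finset.mem_of_mem_erase hc, hxc⟩
      · have h1 := sum_insert_le' (fun c => tsize c.2) (T, u)
          (insert (T, v) (S.erase (T, b.app u v)))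
        have h2 := sum_insert_le' (fun c => tsize c.2) (T, v) (S.erase (T, b.app u v))
        have h3 := Finset.sum_erase_add S (fun c => tsize c.2) hmem
        simp only at h1 h2 h3
        have h4 := bapp_tsize b u v
        omega

end Aux

/-- strong termination: there is no infinite sequence of simplification
steps starting from a deducibility constraint system. -/
theorem step_terminating :
    ¬ ∃ (f : ℕ → Finset Cst) (σ : ℕ → Subst),
        IsCS (f 0) ∧ ∀ n : ℕ, Step (f n) (σ n) (some (f (n + 1))) := by
  rintro ⟨f, σ, -, hstep⟩
  set M : ℕ → ℕ := fun n => (sysVars (f n)).card with hMdef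
  set N : ℕ → ℕ := fun n => ∑ c ∈ f n, Aux.tsize c.2 with hNdef
  have hdec : ∀ n, M (n + 1) < M n ∨ (M (n + 1) ≤ M n ∧ N (n + 1) < N n) :=
    fun n => Aux.step_decrease (hstep n)
  have hM : ∀ n, M (n + 1) ≤ M n := by
    intro n
    rcases hdec n with h | h
    · exact le_of_lt h
    · exact h.1
  have hanti : ∀ a b : ℕ, a ≤ b → M b ≤ M a := fun a b h =>
    antitone_nat_of_succ_le hM h
  obtain ⟨k₀, ⟨n₀, hn₀⟩, hmin⟩ :=
    WellFounded.has_min Nat.lt_wfRel.wf (Set.range M) ⟨M 0, 0, rfl⟩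
  have hMeq : ∀ n, n₀ ≤ n → M n = M n₀ := by
    intro n hn
    refine le_antisymm (hanti n₀ n hn) ?_
    have := hmin (M n) ⟨n, rfl⟩
    rw [hn₀]
    exact not_lt.1 this
  have hNdec : ∀ n, n₀ ≤ n → N (n + 1) < N n := by
    intro n hn
    rcases hdec n with h | h
    · exfalso
      rw [hMeq n hn, hMeq (n + 1) (le_trans hn (Nat.le_succ n))] at h
      exact lt_irrefl _ h
    · exact h.2
  have hbound : ∀ k, N (n₀ + k) + k ≤ N n₀ := by
    intro k
    induction k with
    | zero => simp
    | succ k ihk =>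
        have := hNdec (n₀ + k) (Nat.le_add_right _ _)
        have h2 : n₀ + (k + 1) = (n₀ + k) + 1 := by omega
        rw [h2]
        omega
  have := hbound (N n₀ + 1)
  omega
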